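/- Let k ≥ 2 and n ≥ 2k+1 be integers, and let F be a simple graph on n vertices all of whose connected components are factor-critical, with component orders d_1 ≥ d_2 ≥ … ≥ d_q satisfying Σ_{i=1}^{q} (d_i − 1)/2 = k − 1. If e(F) ≥ C(2k−3,2) + 2, then d_2 ≤ 3 and d_3 = 1; that is, the second-largest component has at most 3 vertices and every component other than the two largest is a single vertex. -/

import Mathlib

/-- A graph `D` is factor-critical if for every vertex `v`, the graph `D - v` has a perfect
matching, i.e. `D` has a matching covering exactly the complement of `{v}`. -/
def FactorCritical {W : Type*} (D : SimpleGraph W) : Prop :=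
  ∀ v : W, ∃ M : D.Subgraph, M.IsMatching ∧ M.verts = {v}ᶜ

/-- Claim 3.3: let `k ≥ 2`, `n ≥ 2k+1`, and let `F` be a graph on `n` vertices all of whose
connected components are factor-critical, with component orders `d₁ ≥ d₂ ≥ ⋯ ≥ d_q`
satisfying `Σᵢ (dᵢ - 1)/2 = k - 1`. If `e(F) ≥ C(2k-3,2) + 2`, then `d₂ ≤ 3` and `d₃ = 1`,
i.e. at most one component has more than `3` vertices and at most two components have more
than one vertex. -/
theorem claim_d2_le_three_and_d3_eq_one
    {V : Type*} [Fintype V] (k n : ℕ) (hk : 2 ≤ k) (hn : 2 * k + 1 ≤ n)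
    (hV : Fintype.card V = n) (F : SimpleGraph V)
    (hfc : ∀ K : F.ConnectedComponent, FactorCritical (F.induce K.supp))
    (hsum : ∑ᶠ K : F.ConnectedComponent, (K.supp.ncard - 1) / 2 = k - 1)
    (he : (2 * k - 3).choose 2 + 2 ≤ F.edgeSet.ncard) :
    {K : F.ConnectedComponent | 3 < K.supp.ncard}.Subsingleton ∧
    {K : F.ConnectedComponent | 1 < K.supp.ncard}.ncard ≤ 2 := by
  classical
  haveI : Fintype F.ConnectedComponent := Fintype.ofFinite _
  set m : F.ConnectedComponent → ℕ := fun K => (K.supp.ncard - 1) / 2 with hm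
  -- oddness of component orders
  have hodd : ∀ K : F.ConnectedComponent, Odd K.supp.ncard := by
    intro K
    obtain ⟨v, hv⟩ := K.exists_rep
    have hv' : v ∈ K.supp := hv
    obtain ⟨M, hM, hMv⟩ := hfc K ⟨v, hv'⟩
    haveI : Fintype ↥M.verts := Fintype.ofFinite _
    have heven := hM.even_card
    have heven' : Even M.verts.ncard := by rwa [Set.ncard_eq_toFinset_card']
    rw [hMv] at heven'
    have hcompl := Set.ncard_add_ncard_compl ({(⟨v, hv'⟩ : ↥K.supp)} : Set ↥K.supp)
    have hnc : Nat.card ↥K.supp = K.supp.ncard := Nat.card_coe_set_eq _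
    have hpos : 0 < K.supp.ncard := (Set.ncard_pos (Set.toFinite _)).mpr ⟨v, hv'⟩
    rw [Set.ncard_singleton] at hcompl
    obtain ⟨t, ht⟩ := heven'
    exact ⟨t, by omega⟩
  have hdm : ∀ K : F.ConnectedComponent, K.supp.ncard = 2 * m K + 1 := by
    intro K
    obtain ⟨t, ht⟩ := hodd K
    simp only [hm, ht]
    omega
  have hsum' : ∑ K : F.ConnectedComponent, m K = k - 1 := by
    rw [← finsum_eq_sum_of_fintype]; exact hsum
  have subsum : ∀ S : Finset F.ConnectedComponent, ∑ i ∈ S, m i ≤ k - 1 :=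
    fun S => hsum' ▸ Finset.sum_le_sum_of_subset (Finset.subset_univ S)
  -- edge counting
  haveI : Fintype ↥F.edgeSet := Fintype.ofFinite _
  have hE : F.edgeSet.ncard = F.edgeFinset.card := Set.ncard_eq_toFinset_card' _
  have hc : ∀ e : Sym2 V, e ∈ F.edgeFinset →
      F.Adj (Quot.out e).1 (Quot.out e).2 := by
    intro e heF
    have h1 : s((Quot.out e).1, (Quot.out e).2) = e := by
      exact Quot.out_eq e
    rw [SimpleGraph.mem_edgeFinset, ← h1, SimpleGraph.mem_edgeSet] at heF
    exact heF
  set c : Sym2 V → F.ConnectedComponent :=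
    fun e => F.connectedComponentMk (Quot.out e).1 with hcdef
  have hfiber : ∀ K : F.ConnectedComponent,
      (F.edgeFinset.filter (fun e => c e = K)).card ≤ K.supp.ncard.choose 2 := by
    intro K
    have hinj : Set.InjOn (fun e : Sym2 V => ({(Quot.out e).1, (Quot.out e).2} : Finset V))
        ↑(F.edgeFinset.filter (fun e => c e = K)) := by
      intro e1 h1 e2 h2 heq
      dsimp only at heq
      simp only [Finset.coe_filter, Set.mem_setOf_eq] at h1 h2
      have a1 := (hc e1 h1.1).ne
      have a2 := (hc e2 h2.1).ne
      have hmem : (Quot.out e1).1 ∈ ({(Quot.out e2).1, (Quot.out e2).2} : Finset V) := by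
        rw [← heq]; simp
      have hmem2 : (Quot.out e1).2 ∈ ({(Quot.out e2).1, (Quot.out e2).2} : Finset V) := by
        rw [← heq]; simp
      simp only [Finset.mem_insert, Finset.mem_singleton] at hmem hmem2
      have he1 : s((Quot.out e1).1, (Quot.out e1).2) = e1 := by
        exact Quot.out_eq e1
      have he2 : s((Quot.out e2).1, (Quot.out e2).2) = e2 := by
        exact Quot.out_eq e2
      rw [← he1, ← he2, Sym2.eq_iff]
      rcases hmem with h | h
      · left
        refine ⟨h, ?_⟩
        rcases hmem2 with h' | h'
        · exact absurd (h.trans h'.symm) a1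
        · exact h'
      · right
        refine ⟨h, ?_⟩
        rcases hmem2 with h' | h'
        · exact h'
        · exact absurd (h.trans h'.symm) a1
    calc (F.edgeFinset.filter (fun e => c e = K)).card
        ≤ (K.supp.toFinset.powersetCard 2).card := by
          apply Finset.card_le_card_of_injOn _ _ hinj
          intro e heK
          simp only [Finset.coe_filter, Finset.mem_filter, Set.mem_setOf_eq, Finset.mem_coe] at heK ⊢
          obtain ⟨he1, he2⟩ := heK
          have hadj := hc e he1
          rw [Finset.mem_powersetCard]
          constructor
          · intro x hx
            simp only [Finset.mem_insert, Finset.mem_singleton] at hx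
            rw [Set.mem_toFinset]
            rcases hx with rfl | rfl
            · exact he2
            · rw [SimpleGraph.ConnectedComponent.mem_supp_iff,
                ← SimpleGraph.ConnectedComponent.connectedComponentMk_eq_of_adj hadj]
              exact he2
          · exact Finset.card_pair hadj.ne
      _ = K.supp.toFinset.card.choose 2 := Finset.card_powersetCard 2 _
      _ = K.supp.ncard.choose 2 := by
          rw [Set.ncard_eq_toFinset_card']
  have hedge : F.edgeSet.ncard ≤ ∑ K : F.ConnectedComponent, K.supp.ncard.choose 2 := by
    rw [hE, Finset.card_eq_sum_card_fiberwise (f := c) (t := Finset.univ)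
      (fun x _ => Finset.mem_univ _)]
    exact Finset.sum_le_sum fun K _ => hfiber K
  -- main contradiction
  have choose_odd : ∀ t : ℕ, (2 * t + 1).choose 2 = t * (2 * t + 1) := by
    intro t
    rw [Nat.choose_two_right]
    have : (2 * t + 1) * (2 * t + 1 - 1) = t * (2 * t + 1) * 2 := by
      rw [Nat.add_sub_cancel]; ring
    rw [this, Nat.mul_div_cancel _ (by norm_num)]
  have main : ¬ (∀ K : F.ConnectedComponent, m K + 2 ≤ k - 1) := by
    intro h
    haveI : Nonempty V := by
      rw [← Fintype.card_pos_iff, hV]; omega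
    obtain ⟨K₀⟩ : Nonempty F.ConnectedComponent :=
      ⟨F.connectedComponentMk (Classical.arbitrary V)⟩
    have hk3 : 3 ≤ k := by have := h K₀; omega
    have hb : ∀ K : F.ConnectedComponent, K.supp.ncard.choose 2 ≤ m K * (2 * k - 5) := by
      intro K
      rw [hdm K, choose_odd]
      exact Nat.mul_le_mul_left _ (by have := h K; omega)
    have htot : F.edgeSet.ncard ≤ (k - 1) * (2 * k - 5) := by
      calc F.edgeSet.ncard ≤ ∑ K : F.ConnectedComponent, K.supp.ncard.choose 2 := hedge
        _ ≤ ∑ K : F.ConnectedComponent, m K * (2 * k - 5) :=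
            Finset.sum_le_sum fun K _ => hb K
        _ = (∑ K : F.ConnectedComponent, m K) * (2 * k - 5) := by
            rw [Finset.sum_mul]
        _ = (k - 1) * (2 * k - 5) := by rw [hsum']
    have hch : (2 * k - 3).choose 2 = (k - 2) * (2 * k - 3) := by
      have h1 : 2 * k - 3 = 2 * (k - 2) + 1 := by omega
      rw [h1, choose_odd]
    obtain ⟨j, rfl⟩ : ∃ j, k = j + 3 := ⟨k - 3, by omega⟩
    rw [hch] at he
    have h1 : (j + 3) - 2 = j + 1 := by omega
    have h2 : 2 * (j + 3) - 3 = 2 * j + 3 := by omega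
    have h3 : (j + 3) - 1 = j + 2 := by omega
    have h4 : 2 * (j + 3) - 5 = 2 * j + 1 := by omega
    rw [h1, h2] at he
    rw [h3, h4] at htot
    nlinarith [he, htot]
  -- derive the two conclusions
  have hm2 : ∀ K : F.ConnectedComponent, 3 < K.supp.ncard → 2 ≤ m K := by
    intro K hK; have := hdm K; omega
  have hm1 : ∀ K : F.ConnectedComponent, 1 < K.supp.ncard → 1 ≤ m K := by
    intro K hK; have := hdm K; omega
  constructor
  · intro A hA B hB
    by_contra hne
    simp only [Set.mem_setOf_eq] at hA hB
    have mA := hm2 A hA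
    have mB := hm2 B hB
    apply main
    intro K
    by_cases hKA : K = A
    · subst hKA
      have := subsum {K, B}
      rw [Finset.sum_pair hne] at this
      omega
    · by_cases hKB : K = B
      · subst hKB
        have := subsum {A, K}
        rw [Finset.sum_pair hne] at this
        omega
      · have := subsum {K, A, B}
        rw [Finset.sum_insert (by simp [hKA, hKB]), Finset.sum_pair hne] at this
        omega
  · by_contra hcard
    push_neg at hcard
    rw [Set.two_lt_ncard (Set.toFinite _)] at hcard
    obtain ⟨A, hA, B, hB, C, hC, hAB, hAC, hBC⟩ := hcard
    simp only [Set.mem_setOf_eq] at hA hB hC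
    have mA := hm1 A hA
    have mB := hm1 B hB
    have mC := hm1 C hC
    have tsum : ∀ X Y Z : F.ConnectedComponent, X ≠ Y → X ≠ Z → Y ≠ Z →
        m X + m Y + m Z ≤ k - 1 := by
      intro X Y Z hXY hXZ hYZ
      have := subsum {X, Y, Z}
      rw [Finset.sum_insert (by simp [hXY, hXZ]), Finset.sum_pair hYZ] at this
      omega
    apply main
    intro K
    by_cases hKA : K = A
    · subst hKA; have := tsum K B C hAB hAC hBC; omega
    · by_cases hKB : K = B
      · subst hKB; have := tsum A K C hAB hAC hBC; omega
      · by_cases hKC : K = C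
        · subst hKC; have := tsum A B K hAB hAC hBC; omega
        · have := subsum {K, A, B, C}
          rw [Finset.sum_insert (by simp [hKA, hKB, hKC]),
            Finset.sum_insert (by simp [hAB, hAC]), Finset.sum_pair hBC] at this
          omega
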